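/- Corollary: If a linear loop program P = (true, LOOP) over ℝⁿ, with LOOP defined by A·(x,x') ≤ b, has a bounded infinite execution, then P has a geometric nontermination argument. In particular, given a fixed point x* with (x*,x*) ∈ LOOP, the tuple (x₀, x₁, y, λ) = (x*, x*, 0, 1) is a geometric nontermination argument for P. -/

import Mathlib

open Filter Finset Metric Topology

noncomputable def sumElimL (n : ℕ) :
    (EuclideanSpace ℝ (Fin n)) × (EuclideanSpace ℝ (Fin n)) →ₗ[ℝ] (Fin n ⊕ Fin n → ℝ) where
  toFun p := Sum.elim p.1 p.2
  map_add' p q := by funext j; cases j <;> rfl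
  map_smul' c p := by funext j; cases j <;> rfl

lemma exists_fixed_point
    (n m : ℕ) (A : Matrix (Fin m) (Fin n ⊕ Fin n) ℝ) (b : Fin m → ℝ)
    (x : ℕ → EuclideanSpace ℝ (Fin n)) (d : ℝ)
    (hbound : ∀ t : ℕ, ‖x t‖ ≤ d)
    (hexec : ∀ t : ℕ, 1 ≤ t → ∀ i, A.mulVec (Sum.elim (x t) (x (t + 1))) i ≤ b i) :
    ∃ xs : EuclideanSpace ℝ (Fin n), ∀ i, A.mulVec (Sum.elim xs xs) i ≤ b i := by
  have hd : 0 ≤ d := le_trans (norm_nonneg _) (hbound 0)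
  set a : ℕ → EuclideanSpace ℝ (Fin n) :=
    fun T => (T : ℝ)⁻¹ • ∑ t ∈ range T, x (t + 1) with ha
  set a' : ℕ → EuclideanSpace ℝ (Fin n) :=
    fun T => (T : ℝ)⁻¹ • ∑ t ∈ range T, x (t + 2) with ha'
  -- averaged constraint
  have hpair : ∀ T : ℕ, (a T, a' T)
      = (T : ℝ)⁻¹ • ∑ t ∈ range T, ((x (t+1), x (t+2)) :
          (EuclideanSpace ℝ (Fin n)) × (EuclideanSpace ℝ (Fin n))) := by
    intro T
    refine Prod.ext ?_ ?_ <;>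
      simp [ha, ha', Prod.fst_sum, Prod.snd_sum]
  have hw : ∀ T : ℕ, (Sum.elim (a T) (a' T) : Fin n ⊕ Fin n → ℝ)
      = (T : ℝ)⁻¹ • ∑ t ∈ range T, (Sum.elim (x (t+1)) (x (t+2)) : Fin n ⊕ Fin n → ℝ) := by
    intro T
    have h1 : (Sum.elim (a T) (a' T) : Fin n ⊕ Fin n → ℝ) = sumElimL n (a T, a' T) := rfl
    rw [h1, hpair T, map_smul, map_sum]
    rfl
  have hconstr : ∀ T : ℕ, 1 ≤ T → ∀ i, A.mulVec (Sum.elim (a T) (a' T)) i ≤ b i := by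
    intro T hT i
    rw [hw T]
    have h2 : A.mulVec ((T : ℝ)⁻¹ • ∑ t ∈ range T,
          (Sum.elim (x (t+1)) (x (t+2)) : Fin n ⊕ Fin n → ℝ))
        = (T : ℝ)⁻¹ • ∑ t ∈ range T, A.mulVec (Sum.elim (x (t+1)) (x (t+2))) := by
      rw [← Matrix.mulVecLin_apply, map_smul, map_sum]
      simp [Matrix.mulVecLin_apply]
    rw [h2]
    have hTpos : (0:ℝ) < (T:ℝ) := by exact_mod_cast hT
    have hsum : (∑ t ∈ range T, A.mulVec (Sum.elim (x (t+1)) (x (t+2)))) i ≤ (T : ℝ) * b i := by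
      rw [Finset.sum_apply]
      calc ∑ t ∈ range T, A.mulVec (Sum.elim (x (t+1)) (x (t+2))) i
          ≤ ∑ _t ∈ range T, b i := by
            refine Finset.sum_le_sum fun t _ => ?_
            simpa [add_assoc] using hexec (t+1) (Nat.le_add_left 1 t) i
        _ = (T : ℝ) * b i := by simp [mul_comm]
    calc ((T : ℝ)⁻¹ • ∑ t ∈ range T, A.mulVec (Sum.elim (x (t+1)) (x (t+2)))) i
        = (T : ℝ)⁻¹ * (∑ t ∈ range T, A.mulVec (Sum.elim (x (t+1)) (x (t+2)))) i := rfl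
      _ ≤ (T : ℝ)⁻¹ * ((T : ℝ) * b i) := mul_le_mul_of_nonneg_left hsum (by positivity)
      _ = b i := by field_simp
  -- shift identity
  have hshift : ∀ T : ℕ, a' T = a T + (T : ℝ)⁻¹ • (x (T+1) - x 1) := by
    intro T
    have h1 : ∑ t ∈ range (T+1), x (t + 1) = (∑ t ∈ range T, x (t + 2)) + x 1 := by
      simpa [add_assoc] using Finset.sum_range_succ' (fun t => x (t + 1)) T
    have h2 : ∑ t ∈ range (T+1), x (t + 1) = (∑ t ∈ range T, x (t + 1)) + x (T + 1) := by
      simpa using Finset.sum_range_succ (fun t => x (t + 1)) T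
    have hsum : ∑ t ∈ range T, x (t + 2) = (∑ t ∈ range T, x (t + 1)) + (x (T+1) - x 1) := by
      have h3 := eq_sub_of_add_eq (h1.symm.trans h2)
      rw [h3]; abel
    show (T : ℝ)⁻¹ • ∑ t ∈ range T, x (t + 2) = _
    rw [hsum, smul_add]
  -- boundedness of a
  have habound : ∀ T : ℕ, ‖a T‖ ≤ d := by
    intro T
    rcases Nat.eq_zero_or_pos T with h0 | hT
    · simp [ha, h0, hd]
    · have hs : ‖∑ t ∈ range T, x (t + 1)‖ ≤ (T : ℝ) * d := by
        calc ‖∑ t ∈ range T, x (t + 1)‖ ≤ ∑ t ∈ range T, ‖x (t + 1)‖ := norm_sum_le _ _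
          _ ≤ ∑ _t ∈ range T, d := Finset.sum_le_sum fun t _ => hbound (t+1)
          _ = (T : ℝ) * d := by simp [mul_comm]
      have hTpos : (0:ℝ) < (T:ℝ) := by exact_mod_cast hT
      calc ‖a T‖ = (T:ℝ)⁻¹ * ‖∑ t ∈ range T, x (t + 1)‖ := by
            rw [ha]
            simp [norm_smul, abs_of_nonneg (le_of_lt (inv_pos.2 hTpos))]
        _ ≤ (T:ℝ)⁻¹ * ((T : ℝ) * d) := mul_le_mul_of_nonneg_left hs (by positivity)
        _ = d := by field_simp
  -- convergent subsequence
  obtain ⟨L, -, φ, hφ, hL⟩ := tendsto_subseq_of_bounded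
    (isBounded_closedBall (x := (0 : EuclideanSpace ℝ (Fin n))) (r := d))
    (fun T => mem_closedBall_zero_iff.2 (habound T))
  have hφtop : Tendsto (fun k => (φ k : ℝ)) atTop atTop :=
    tendsto_natCast_atTop_atTop.comp hφ.tendsto_atTop
  have herr : Tendsto (fun k => (φ k : ℝ)⁻¹ • (x (φ k + 1) - x 1)) atTop
      (𝓝 (0 : EuclideanSpace ℝ (Fin n))) := by
    have htend : Tendsto (fun k => (φ k : ℝ)⁻¹ * (d + d)) atTop (𝓝 0) := by
      simpa using (tendsto_inv_atTop_zero.comp hφtop).mul_const (d + d)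
    refine squeeze_zero_norm (fun k => ?_) htend
    rw [norm_smul]
    have h1 : ‖x (φ k + 1) - x 1‖ ≤ d + d :=
      le_trans (norm_sub_le _ _) (add_le_add (hbound _) (hbound _))
    have h2 : ‖((φ k : ℝ)⁻¹ : ℝ)‖ = (φ k : ℝ)⁻¹ := by simp
    rw [h2]
    exact mul_le_mul_of_nonneg_left h1 (by positivity)
  have hL' : Tendsto (fun k => a' (φ k)) atTop (𝓝 L) := by
    have he : (fun k => a' (φ k)) = fun k => a (φ k) + (φ k : ℝ)⁻¹ • (x (φ k + 1) - x 1) := by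
      funext k; exact hshift (φ k)
    rw [he]
    simpa using hL.add herr
  refine ⟨L, fun i => ?_⟩
  have hcont : Continuous (fun p : (EuclideanSpace ℝ (Fin n)) × (EuclideanSpace ℝ (Fin n)) =>
      A.mulVec (Sum.elim p.1 p.2) i) := by
    have : (fun p : (EuclideanSpace ℝ (Fin n)) × (EuclideanSpace ℝ (Fin n)) =>
        A.mulVec (Sum.elim p.1 p.2) i)
        = (LinearMap.proj i (R := ℝ) (φ := fun _ : Fin m => ℝ)).comp
            (A.mulVecLin.comp (sumElimL n)) := rfl
    rw [this]
    exact LinearMap.continuous_of_finiteDimensional _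
  have hconv : Tendsto (fun k => A.mulVec (Sum.elim (a (φ k)) (a' (φ k))) i) atTop
      (𝓝 (A.mulVec (Sum.elim L L) i)) := by
    have := (hcont.continuousAt (x := (L, L))).tendsto.comp
      ((Tendsto.comp hL tendsto_id).prodMk_nhds hL')
    exact this
  apply le_of_tendsto hconv
  filter_upwards [hφ.tendsto_atTop.eventually_ge_atTop 1] with k hk
  exact hconstr (φ k) hk i


/-- **Corollary.**
If a linear loop program `P = (true, LOOP)` over `ℝⁿ`, with `LOOP` defined by
`A·(x,x') ≤ b`, has a bounded infinite execution, then `P` has a geometric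
nontermination argument `(x₀, x₁, y, lam)` (the init condition is automatically
true since the stem is the full relation, so it is omitted).  In particular,
for every fixed point `x*` with `(x*, x*) ∈ LOOP`, the tuple
`(x*, x*, 0, 1)` is a geometric nontermination argument for `P`. -/
theorem bounded_execution_implies_geometric_nontermination_argument
    (n m : ℕ)
    (A : Matrix (Fin m) (Fin n ⊕ Fin n) ℝ) (b : Fin m → ℝ)
    (x : ℕ → EuclideanSpace ℝ (Fin n)) (d : ℝ)
    (hbound : ∀ t : ℕ, ‖x t‖ ≤ d)
    (hexec : ∀ t : ℕ, 1 ≤ t → ∀ i, A.mulVec (Sum.elim (x t) (x (t + 1))) i ≤ b i) :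
    (∃ (x₀ x₁ y : EuclideanSpace ℝ (Fin n)) (lam : ℝ),
      0 < lam ∧
      (∀ i, A.mulVec (Sum.elim x₁ (x₁ + y)) i ≤ b i) ∧
      (∀ i, A.mulVec (Sum.elim y (lam • y)) i ≤ 0)) ∧
    (∀ xstar : EuclideanSpace ℝ (Fin n),
      (∀ i, A.mulVec (Sum.elim xstar xstar) i ≤ b i) →
      (0 : ℝ) < 1 ∧
      (∀ i, A.mulVec (Sum.elim xstar (xstar + (0 : EuclideanSpace ℝ (Fin n)))) i ≤ b i) ∧
      (∀ i, A.mulVec (Sum.elim (0 : EuclideanSpace ℝ (Fin n))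
        ((1 : ℝ) • (0 : EuclideanSpace ℝ (Fin n)))) i ≤ 0)) := by
  constructor
  · obtain ⟨xs, hxs⟩ := exists_fixed_point n m A b x d hbound hexec
    refine ⟨xs, xs, 0, 1, one_pos, ?_, ?_⟩
    · simpa using hxs
    · intro i
      have hz : (Sum.elim (0 : EuclideanSpace ℝ (Fin n))
          ((1 : ℝ) • (0 : EuclideanSpace ℝ (Fin n))) : Fin n ⊕ Fin n → ℝ) = 0 := by
        funext j; cases j <;> simp
      simp [hz, Matrix.mulVec_zero]
  · intro xstar hstar
    refine ⟨one_pos, by simpa using hstar, ?_⟩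
    intro i
    have hz : (Sum.elim (0 : EuclideanSpace ℝ (Fin n))
        ((1 : ℝ) • (0 : EuclideanSpace ℝ (Fin n))) : Fin n ⊕ Fin n → ℝ) = 0 := by
      funext j; cases j <;> simp
    simp [hz, Matrix.mulVec_zero]
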